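/- arXiv:2106.12249 — 2 statements merged into one kernel-verified Lean document; each statement's English description precedes it below -/
import Mathlib

section
/- Let G be an A-Stick graph, ≺^c a canonical order for G, and b_t, b_s ∈ B such that b_t ≺^c b_s and 1_s ≤ 1_t. Then b_t ≺° b_s or N(b_t) ⊆ N(b_s). -/
open Sum

/-- The relation `≺°` generated by the rules (O), (A), (TB), (FB), (T). -/
inductive Prec (n : ℕ) (β : Type) (E : Fin n → β → Prop) (k : β → Fin n) :
    (Fin n ⊕ β) → (Fin n ⊕ β) → Prop
  | O : ∀ {i j : Fin n}, i < j → Prec n β E k (inl i) (inl j)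
  | A : ∀ {t : Fin n} {j : β}, E t j → Prec n β E k (inl t) (inr j)
  | TB : ∀ {s t : Fin n} {h j : β}, s < t → t < k j → E s j → ¬ E t j → E t h →
      Prec n β E k (inr h) (inr j)
  | FB : ∀ {t : Fin n} {w h j : β}, Prec n β E k (inr w) (inr j) → k j < t → E t w →
      E t h → Prec n β E k (inr h) (inr j)
  | T : ∀ {p q r : Fin n ⊕ β}, Prec n β E k p q → Prec n β E k q r → Prec n β E k p r
/-- A Stick order for `G = (A ∪ B, E)`: a linear (strict total) order on `A ∪ B` such that
every `A`-endpoint of an edge precedes its `B`-endpoint, and there is no forbidden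
configuration `a' ≺ a ≺ b ≺ b'` with `a'b ∈ E`, `ab' ∈ E`, `ab ∉ E`. -/
def IsStickOrder (n : ℕ) (β : Type) (E : Fin n → β → Prop)
    (r : (Fin n ⊕ β) → (Fin n ⊕ β) → Prop) : Prop :=
  IsStrictTotalOrder (Fin n ⊕ β) r ∧
  (∀ (a : Fin n) (b : β), E a b → r (inl a) (inr b)) ∧
  ¬ ∃ (a a' : Fin n) (b b' : β),
      r (inl a') (inl a) ∧ r (inl a) (inr b) ∧ r (inr b) (inr b') ∧
      E a' b ∧ E a b' ∧ ¬ E a b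

/-- An A-Stick order: a Stick order whose restriction to `A` is the given order. -/
def IsAStickOrder (n : ℕ) (β : Type) (E : Fin n → β → Prop)
    (r : (Fin n ⊕ β) → (Fin n ⊕ β) → Prop) : Prop :=
  IsStickOrder n β E r ∧ ∀ i j : Fin n, r (inl i) (inl j) ↔ i < j
/-- A canonical order for `G` (with `m j = max {i | a_i ≺° b_j}` given as a parameter):
a linear (strict total) order on `A ∪ B` extending `≺°` in which every `b_j` is
left-optimal, i.e. `a_{m_j} ≺ b_j` and `b_j ≺ a_{m_j + 1}` whenever `m_j < n`. -/
def IsCanonicalOrder (n : ℕ) (β : Type) (E : Fin n → β → Prop) (k : β → Fin n)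
    (m : β → Fin n) (r : (Fin n ⊕ β) → (Fin n ⊕ β) → Prop) : Prop :=
  IsStrictTotalOrder (Fin n ⊕ β) r ∧
  (∀ c d : Fin n ⊕ β, Prec n β E k c d → r c d) ∧
  ∀ j : β, r (inl (m j)) (inr j) ∧
    ∀ hlt : (m j : ℕ) + 1 < n, r (inr j) (inl ⟨(m j : ℕ) + 1, hlt⟩)

section Aux
variable {n : ℕ} {β : Type} {E : Fin n → β → Prop} {k : β → Fin n}

lemma prec_sound {r : (Fin n ⊕ β) → (Fin n ⊕ β) → Prop}
    (hk : ∀ j : β, E (k j) j ∧ ∀ i : Fin n, E i j → i ≤ k j)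
    (hr : IsAStickOrder n β E r) {c d} (h : Prec n β E k c d) : r c d := by
  obtain ⟨⟨hsto, hedge, hforb⟩, hrestrict⟩ := hr
  have htri : ∀ a b, r a b ∨ a = b ∨ r b a := by haveI := hsto; exact trichotomous
  have htrans : ∀ {a b c}, r a b → r b c → r a c := fun hab hbc =>
    hsto.toIsStrictOrder.toIsTrans.trans _ _ _ hab hbc
  induction h with
  | O hij => exact (hrestrict _ _).mpr hij
  | A hE => exact hedge _ _ hE
  | @TB s t h j hst htk hEsj hnEtj hEth =>
      rcases htri (inr h) (inr j) with h1 | h1 | h1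
      · exact h1
      · injection h1 with h2; subst h2; exact absurd hEth hnEtj
      · exact absurd ⟨t, s, j, h, (hrestrict _ _).mpr hst,
          htrans ((hrestrict _ _).mpr htk) (hedge _ _ (hk j).1), h1, hEsj, hEth, hnEtj⟩ hforb
  | @FB t w h j hwj hkt hEtw hEth ih =>
      have hnEtj : ¬ E t j := fun hE => absurd ((hk j).2 t hE) (not_le_of_gt hkt)
      rcases htri (inr h) (inr j) with h1 | h1 | h1
      · exact h1
      · injection h1 with h2; subst h2; exact absurd hEth hnEtj
      · exact absurd ⟨t, k j, j, h, (hrestrict _ _).mpr hkt,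
          htrans (hedge _ _ hEtw) ih, h1, (hk j).1, hEth, hnEtj⟩ hforb
  | T _ _ ih1 ih2 => exact htrans ih1 ih2

lemma prec_irrefl (hk : ∀ j : β, E (k j) j ∧ ∀ i : Fin n, E i j → i ≤ k j)
    (hA : ∃ r, IsAStickOrder n β E r) : ∀ c, ¬ Prec n β E k c c := by
  intro c hc
  obtain ⟨r, hr⟩ := hA
  exact hr.1.1.toIsStrictOrder.toIrrefl.irrefl c (prec_sound hk hr hc)

lemma prec_target_inl : ∀ {c d}, Prec n β E k c d → ∀ y : Fin n, d = inl y →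
    ∃ x, c = inl x ∧ x < y := by
  intro c d h
  induction h with
  | @O i j hij =>
      intro y hy; injection hy with hy; subst hy; exact ⟨i, rfl, hij⟩
  | A _ => intro y hy; simp at hy
  | TB _ _ _ _ _ => intro y hy; simp at hy
  | FB _ _ _ _ => intro y hy; simp at hy
  | T h1 h2 ih1 ih2 =>
      intro y hy
      obtain ⟨x', hq, hx'y⟩ := ih2 y hy
      obtain ⟨x, hc, hxx'⟩ := ih1 x' hq
      exact ⟨x, hc, hxx'.trans hx'y⟩

lemma prec_decomp : ∀ {c d}, Prec n β E k c d → ∀ (i : Fin n) (j : β),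
    c = inl i → d = inr j →
    ∃ (i' : Fin n) (w : β), i ≤ i' ∧ E i' w ∧ (w = j ∨ Prec n β E k (inr w) (inr j)) := by
  intro c d h
  induction h with
  | O _ => intro i j _ hd; simp at hd
  | @A t j' hE =>
      intro i j hc hd
      injection hc with hc; injection hd with hd
      exact ⟨t, j', hc.ge, hE, Or.inl hd⟩
  | TB _ _ _ _ _ => intro i j hc _; simp at hc
  | FB _ _ _ _ => intro i j hc _; simp at hc
  | @T p q r hpq hqr ih1 ih2 =>
      intro i j hc hd; subst hc; subst hd
      cases q with
      | inl i'' =>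
          obtain ⟨x, hx, hlt⟩ := prec_target_inl hpq i'' rfl
          injection hx with hx; subst hx
          obtain ⟨i', w, hle, hEw, hcase⟩ := ih2 i'' j rfl rfl
          exact ⟨i', w, (le_of_lt hlt).trans hle, hEw, hcase⟩
      | inr v =>
          obtain ⟨i', w, hle, hEw, hcase⟩ := ih1 i v rfl rfl
          rcases hcase with rfl | hwv
          · exact ⟨i', w, hle, hEw, Or.inr hqr⟩
          · exact ⟨i', w, hle, hEw, Or.inr (Prec.T hwv hqr)⟩

lemma prec_main [Fintype β] (hk : ∀ j : β, E (k j) j ∧ ∀ i : Fin n, E i j → i ≤ k j)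
    (hA : ∃ r, IsAStickOrder n β E r) :
    ∀ (j : β) (i : Fin n) (h : β), Prec n β E k (inl i) (inr j) → k j < i → E i h →
      Prec n β E k (inr h) (inr j) := by
  have hirr := prec_irrefl hk hA
  have hwf : WellFounded (fun w j : β => Prec n β E k (inr w) (inr j)) := by
    haveI : IsTrans β (fun w j : β => Prec n β E k (inr w) (inr j)) :=
      ⟨fun a b c hab hbc => Prec.T hab hbc⟩
    haveI : IsIrrefl β (fun w j : β => Prec n β E k (inr w) (inr j)) :=
      ⟨fun a ha => hirr _ ha⟩
    exact Finite.wellFounded_of_trans_of_irrefl _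
  intro j
  induction j using WellFounded.induction hwf with
  | _ j IH =>
  have B : ∀ {x y}, Prec n β E k x y → ∀ w, x = inr w → y = inr j →
      ∀ (i : Fin n) (h : β), k j < i → E i h →
      (E i w ∨ Prec n β E k (inl i) (inr w)) → Prec n β E k (inr h) (inr j) := by
    intro x y hxy
    induction hxy with
    | O _ => intro w hx; simp at hx
    | A _ => intro w hx; simp at hx
    | @TB s0 t0 h' j' hst htk hEs0 hnE hEt0 =>
        intro w hx hy i h hki hEih hor
        injection hx with hx; injection hy with hy; subst hx; subst hy
        have hwj : Prec n β E k (inr h') (inr j') := Prec.TB hst htk hEs0 hnE hEt0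
        by_cases hEiw : E i h'
        · exact Prec.FB hwj hki hEiw hEih
        · have hiw : Prec n β E k (inl i) (inr h') := hor.resolve_left hEiw
          rcases lt_trichotomy i (k h') with hlt | heq | hgt
          · have ht0i : t0 < i := lt_trans htk hki
            exact Prec.T (Prec.TB ht0i hlt hEt0 hEiw hEih) hwj
          · exact absurd (show E i h' by rw [heq]; exact (hk h').1) hEiw
          · exact Prec.T (IH h' hwj i h hiw hgt hEih) hwj
    | @FB t0 w0 h' j' hw0j hkt0 hEt0w0 hEt0h' ih =>
        intro w hx hy i h hki hEih hor
        injection hx with hx; injection hy with hy; subst hx; subst hy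
        have hwj : Prec n β E k (inr h') (inr j') := Prec.FB hw0j hkt0 hEt0w0 hEt0h'
        by_cases hEiw : E i h'
        · exact Prec.FB hwj hki hEiw hEih
        · have hiw : Prec n β E k (inl i) (inr h') := hor.resolve_left hEiw
          rcases lt_trichotomy i t0 with hlt | heq | hgt
          · exact ih w0 rfl rfl i h hki hEih
              (Or.inr (Prec.T (Prec.O hlt) (Prec.A hEt0w0)))
          · exact absurd (show E i h' by rw [heq]; exact hEt0h') hEiw
          · rcases lt_trichotomy i (k h') with hlt2 | heq2 | hgt2
            · exact Prec.T (Prec.TB hgt hlt2 hEt0h' hEiw hEih) hwj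
            · exact absurd (show E i h' by rw [heq2]; exact (hk h').1) hEiw
            · exact Prec.T (IH h' hwj i h hiw hgt2 hEih) hwj
    | @T p q r hpq hqr ih1 ih2 =>
        intro w hx hy i h hki hEih hor
        subst hx; subst hy
        cases q with
        | inl y0 =>
            obtain ⟨x, hx', _⟩ := prec_target_inl hpq y0 rfl
            simp at hx'
        | inr v =>
            have hiw : Prec n β E k (inl i) (inr w) := hor.elim (fun e => Prec.A e) id
            exact ih2 v rfl rfl i h hki hEih (Or.inr (Prec.T hiw hpq))
  intro i h hij hki hEih
  obtain ⟨i', w, hle, hEw, hcase⟩ := prec_decomp hij i j rfl rfl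
  rcases hcase with h' | hwj
  · subst h'
    exact absurd ((hk w).2 i' hEw) (not_le_of_gt (lt_of_lt_of_le hki hle))
  · rcases eq_or_lt_of_le hle with h' | hlt
    · subst h'
      exact B hwj w rfl rfl i h hki hEih (Or.inl hEw)
    · exact B hwj w rfl rfl i h hki hEih (Or.inr (Prec.T (Prec.O hlt) (Prec.A hEw)))

end Aux

/-- Let `G` be an A-Stick graph, `≺^c` a canonical order for `G`, and
`b_t, b_s ∈ B` with `b_t ≺^c b_s` and `1_s ≤ 1_t`. Then `b_t ≺° b_s` or `N(b_t) ⊆ N(b_s)`. -/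
theorem stmt11 (n : ℕ) (β : Type) [Fintype β] (E : Fin n → β → Prop) (k : β → Fin n)
    (hk : ∀ j : β, E (k j) j ∧ ∀ i : Fin n, E i j → i ≤ k j)
    (one : β → Fin n)
    (hone : ∀ j : β, E (one j) j ∧ ∀ i : Fin n, E i j → one j ≤ i)
    (m : β → Fin n)
    (hm : ∀ j : β, Prec n β E k (inl (m j)) (inr j) ∧
      ∀ i : Fin n, Prec n β E k (inl i) (inr j) → i ≤ m j)
    (hA : ∃ r, IsAStickOrder n β E r)
    (rc : (Fin n ⊕ β) → (Fin n ⊕ β) → Prop)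
    (hrc : IsCanonicalOrder n β E k m rc)
    (t s : β) (hts : rc (inr t) (inr s)) (h1 : one s ≤ one t) :
    Prec n β E k (inr t) (inr s) ∨ ∀ a : Fin n, E a t → E a s := by
  by_cases hsub : ∀ a, E a t → E a s
  · exact Or.inr hsub
  left
  push_neg at hsub
  obtain ⟨i, hEit, hnEis⟩ := hsub
  have h1t : one t ≤ i := (hone t).2 i hEit
  have h1si : one s ≤ i := le_trans h1 h1t
  rcases lt_trichotomy i (k s) with hlt | heq | hgt
  · have h1s_lt : one s < i :=
      lt_of_le_of_ne h1si (fun he => hnEis (by rw [← he]; exact (hone s).1))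
    exact Prec.TB h1s_lt hlt (hone s).1 hnEis hEit
  · exact absurd (show E i s by rw [heq]; exact (hk s).1) hnEis
  · have htrans : ∀ {a b c}, rc a b → rc b c → rc a c := fun hab hbc =>
      hrc.1.toIsStrictOrder.toIsTrans.trans _ _ _ hab hbc
    have hirr : ∀ a, ¬ rc a a := hrc.1.toIsStrictOrder.toIrrefl.irrefl
    have hrc_is : rc (inl i) (inr s) := htrans (hrc.2.1 _ _ (Prec.A hEit)) hts
    have him : i ≤ m s := by
      by_contra hnot
      push_neg at hnot
      have hmi : (m s : ℕ) < (i : ℕ) := hnot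
      have hlt' : (m s : ℕ) + 1 < n := lt_of_le_of_lt hmi i.isLt
      have hsa : rc (inr s) (inl ⟨(m s : ℕ) + 1, hlt'⟩) := (hrc.2.2 s).2 hlt'
      have hsi : rc (inr s) (inl i) := by
        rcases eq_or_lt_of_le (show ((⟨(m s : ℕ) + 1, hlt'⟩ : Fin n) ≤ i) from by
            simp [Fin.le_def]; omega) with h' | h'
        · rw [← h']; exact hsa
        · exact htrans hsa (hrc.2.1 _ _ (Prec.O h'))
      exact hirr _ (htrans hsi hrc_is)
    have hprec_is : Prec n β E k (inl i) (inr s) := by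
      rcases eq_or_lt_of_le him with h' | h'
      · rw [h']; exact (hm s).1
      · exact Prec.T (Prec.O h') (hm s).1
    exact prec_main hk hA s i t hprec_is hgt hEit
end

section
/- If G is an A-Stick N-overlap graph, then G has exactly one canonical order. -/
open Sum

/-- `G` is an N-overlap graph: for all distinct `b_s, b_t ∈ B`, neither `N(b_s) ⊆ N(b_t)`
nor `N(b_t) ⊆ N(b_s)`. -/
def NOverlap (n : ℕ) (β : Type) (E : Fin n → β → Prop) : Prop :=
  ∀ s t : β, s ≠ t → ¬ ∀ a : Fin n, E a s → E a t

section Aux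
variable {n : ℕ} {β : Type} {E : Fin n → β → Prop} {k : β → Fin n} {m : β → Fin n}

lemma prec_inr_shape {c d} (h : Prec n β E k c d) :
    ∀ j : β, c = inr j → ∃ h', d = inr h' := by
  induction h with
  | O h => exact fun j hj => absurd hj (by simp)
  | A h => exact fun j hj => absurd hj (by simp)
  | TB _ _ _ _ _ => exact fun j _ => ⟨_, rfl⟩
  | FB _ _ _ _ => exact fun j _ => ⟨_, rfl⟩
  | T h1 h2 ih1 ih2 =>
      intro j hj
      obtain ⟨u, hu⟩ := ih1 j hj
      exact ih2 u hu

lemma prec_inl_inl {c d} (h : Prec n β E k c d) :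
    ∀ i i' : Fin n, c = inl i → d = inl i' → i < i' := by
  induction h with
  | O h => intro i i' hc hd; cases hc; cases hd; exact h
  | A h => intro i i' hc hd; exact absurd hd (by simp)
  | TB _ _ _ _ _ => intro i i' hc hd; exact absurd hc (by simp)
  | FB _ _ _ _ => intro i i' hc hd; exact absurd hc (by simp)
  | T h1 h2 ih1 ih2 =>
      rename_i p q r
      intro i i' hc hd
      subst hc; subst hd
      rcases q with u | v
      · exact lt_trans (ih1 i u rfl rfl) (ih2 u i' rfl rfl)
      · obtain ⟨u, hu⟩ := prec_inr_shape h2 v rfl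
        exact absurd hu (by simp)

lemma prec_exists_reach (hk : ∀ j : β, E (k j) j ∧ ∀ i : Fin n, E i j → i ≤ k j)
    {c d} (h : Prec n β E k c d) :
    ∀ (i : Fin n) (j : β), c = inl i → d = inr j →
      ∃ w, (w = j ∨ Prec n β E k (inr w) (inr j)) ∧ i ≤ k w := by
  induction h with
  | O h => intro i j hc hd; exact absurd hd (by simp)
  | A h =>
      rename_i t0 j0
      intro i j hc hd; cases hc; cases hd
      exact ⟨j0, Or.inl rfl, (hk j0).2 _ h⟩
  | TB _ _ _ _ _ => intro i j hc hd; exact absurd hc (by simp)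
  | FB _ _ _ _ => intro i j hc hd; exact absurd hc (by simp)
  | T h1 h2 ih1 ih2 =>
      rename_i p q r
      intro i j hc hd
      subst hc; subst hd
      rcases q with u | v
      · obtain ⟨w, hw, huw⟩ := ih2 u j rfl rfl
        exact ⟨w, hw, le_trans (le_of_lt (prec_inl_inl h1 i u rfl rfl)) huw⟩
      · obtain ⟨w, hw, hiw⟩ := ih1 i v rfl rfl
        refine ⟨w, ?_, hiw⟩
        rcases hw with rfl | hw
        · exact Or.inr h2
        · exact Or.inr (Prec.T hw h2)

lemma prec_star (hk : ∀ j : β, E (k j) j ∧ ∀ i : Fin n, E i j → i ≤ k j)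
    {c d} (hcd : Prec n β E k c d) :
    ∀ (w j : β), c = inr w → d = inr j →
    ∀ (t : Fin n) (b : β), k j < t → t ≤ k w → E t b →
      Prec n β E k (inr b) (inr j) := by
  induction hcd with
  | O h => intro w j hc; exact absurd hc (by simp)
  | A h => intro w j hc; exact absurd hc (by simp)
  | TB hst htk hsj hntj hth =>
      rename_i s t0 h0 j0
      intro w j hc hd t b hkjt htkw hEtb
      cases hc; cases hd
      by_cases hEw : E t h0
      · exact Prec.FB (Prec.TB hst htk hsj hntj hth) hkjt hEw hEtb
      · have h1 : t0 < t := lt_trans htk hkjt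
        have h2 : t < k h0 := lt_of_le_of_ne htkw (fun he => hEw (by rw [he]; exact (hk h0).1))
        exact Prec.T (Prec.TB h1 h2 hth hEw hEtb) (Prec.TB hst htk hsj hntj hth)
  | FB hwj hkjt' hEt'w hEt'h ih =>
      rename_i t' w' h0 j0
      intro w j hc hd t b hkjt htkw hEtb
      cases hc; cases hd
      by_cases hEw : E t h0
      · exact Prec.FB (Prec.FB hwj hkjt' hEt'w hEt'h) hkjt hEw hEtb
      · rcases lt_trichotomy t' t with h1 | h1 | h1
        · have h2 : t < k h0 :=
            lt_of_le_of_ne htkw (fun he => hEw (by rw [he]; exact (hk h0).1))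
          exact Prec.T (Prec.TB h1 h2 hEt'h hEw hEtb) (Prec.FB hwj hkjt' hEt'w hEt'h)
        · exact absurd (h1 ▸ hEt'h) hEw
        · exact ih w' j0 rfl rfl t b hkjt (le_trans (le_of_lt h1) ((hk w').2 t' hEt'w)) hEtb
  | T h1 h2 ih1 ih2 =>
      rename_i p q r
      intro w j hc hd t b hkjt htkw hEtb
      subst hc; subst hd
      obtain ⟨u, hu⟩ := prec_inr_shape h1 w rfl
      subst hu
      rcases le_or_gt t (k u) with hle | hlt
      · exact ih2 u j rfl rfl t b hkjt hle hEtb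
      · exact Prec.T (ih1 w u rfl rfl t b hlt htkw hEtb) h2

lemma prec_main_s15 (hk : ∀ j : β, E (k j) j ∧ ∀ i : Fin n, E i j → i ≤ k j)
    (hm : ∀ j : β, Prec n β E k (inl (m j)) (inr j) ∧
      ∀ i : Fin n, Prec n β E k (inl i) (inr j) → i ≤ m j)
    (j b : β) (t : Fin n) (h1 : k j < t) (h2 : t ≤ m j) (h3 : E t b) :
    Prec n β E k (inr b) (inr j) := by
  have htj : Prec n β E k (inl t) (inr j) := by
    rcases lt_or_eq_of_le h2 with h | h
    · exact Prec.T (Prec.O h) (hm j).1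
    · rw [h]; exact (hm j).1
  obtain ⟨w, hw, htw⟩ := prec_exists_reach hk htj t j rfl rfl
  rcases hw with rfl | hw
  · exact absurd htw (not_le.mpr h1)
  · exact prec_star hk hw w j rfl rfl t b h1 htw h3

lemma stick_ext {r : (Fin n ⊕ β) → (Fin n ⊕ β) → Prop}
    (hk : ∀ j : β, E (k j) j ∧ ∀ i : Fin n, E i j → i ≤ k j)
    (hr : IsAStickOrder n β E r) : ∀ {c d}, Prec n β E k c d → r c d := by
  obtain ⟨⟨hsto, hedge, hforb⟩, hord⟩ := hr
  have htrans : ∀ {x y z}, r x y → r y z → r x z := fun h1 h2 => hsto.trans _ _ _ h1 h2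
  have htri := (haveI := hsto; trichotomous_of r)
  intro c d hcd
  induction hcd with
  | O h => exact (hord _ _).mpr h
  | A h => exact hedge _ _ h
  | TB hst htk hsj hntj hth =>
      rename_i s t h0 j0
      rcases htri (inr h0) (inr j0) with h | h | h
      · exact h
      · cases h; exact absurd hth hntj
      · exact absurd ⟨t, s, j0, h0, (hord s t).mpr hst,
          htrans ((hord t (k j0)).mpr htk) (hedge _ _ (hk j0).1), h, hsj, hth, hntj⟩ hforb
  | FB hwj hkjt hEtw hEth ih =>
      rename_i t w h0 j0
      have hntj : ¬ E t j0 := fun hE => absurd ((hk j0).2 t hE) (not_le.mpr hkjt)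
      rcases htri (inr h0) (inr j0) with h | h | h
      · exact h
      · cases h; exact absurd hEth hntj
      · exact absurd ⟨t, k j0, j0, h0, (hord _ _).mpr hkjt,
          htrans (hedge _ _ hEtw) ih, h, (hk j0).1, hEth, hntj⟩ hforb
  | T h1 h2 ih1 ih2 => exact htrans ih1 ih2

section Canon
variable {r : (Fin n ⊕ β) → (Fin n ⊕ β) → Prop}

lemma canon_asymm (hc : IsCanonicalOrder n β E k m r) {c d} (h1 : r c d) (h2 : r d c) :
    False :=
  hc.1.irrefl c (hc.1.trans _ _ _ h1 h2)

lemma canon_inl_le (hc : IsCanonicalOrder n β E k m r) {i : Fin n} {j : β} (h : i ≤ m j) :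
    r (inl i) (inr j) := by
  rcases lt_or_eq_of_le h with h' | h'
  · exact hc.1.trans _ _ _ (hc.2.1 _ _ (Prec.O h')) (hc.2.2 j).1
  · rw [h']; exact (hc.2.2 j).1

lemma canon_inr_lt (hc : IsCanonicalOrder n β E k m r) {i : Fin n} {j : β} (h : m j < i) :
    r (inr j) (inl i) := by
  have hlt : (m j : ℕ) + 1 < n := Nat.lt_of_le_of_lt (Nat.succ_le_of_lt (Fin.lt_def.mp h)) i.isLt
  have step := (hc.2.2 j).2 hlt
  rcases eq_or_lt_of_le (show (⟨(m j : ℕ) + 1, hlt⟩ : Fin n) ≤ i from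
      Fin.le_def.mpr (Nat.succ_le_of_lt (Fin.lt_def.mp h))) with he | hl
  · exact he ▸ step
  · exact hc.1.trans _ _ _ step (hc.2.1 _ _ (Prec.O hl))

lemma canon_lt_of_inl_inl (hc : IsCanonicalOrder n β E k m r) {i i' : Fin n}
    (h : r (inl i) (inl i')) : i < i' := by
  rcases lt_trichotomy i i' with h' | h' | h'
  · exact h'
  · subst h'; exact absurd h (fun hh => hc.1.irrefl _ hh)
  · exact absurd h (fun hh => canon_asymm hc hh (hc.2.1 _ _ (Prec.O h')))

lemma canon_le_of_inl_inr (hc : IsCanonicalOrder n β E k m r) {i : Fin n} {j : β}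
    (h : r (inl i) (inr j)) : i ≤ m j := by
  by_contra hcon
  exact canon_asymm hc h (canon_inr_lt hc (lt_of_not_ge hcon))

lemma canon_lt_of_inr_inl (hc : IsCanonicalOrder n β E k m r) {i : Fin n} {j : β}
    (h : r (inr j) (inl i)) : m j < i := by
  by_contra hcon
  exact canon_asymm hc h (canon_inl_le hc (le_of_not_gt hcon))

lemma canon_mlt (hc : IsCanonicalOrder n β E k m r) {j h' : β} (hmm : m j < m h') :
    r (inr j) (inr h') := by
  have hlt : (m j : ℕ) + 1 < n :=
    Nat.lt_of_le_of_lt (Nat.succ_le_of_lt (Fin.lt_def.mp hmm)) (m h').isLt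
  exact hc.1.trans _ _ _ ((hc.2.2 j).2 hlt)
    (canon_inl_le hc (Fin.le_def.mpr (Nat.succ_le_of_lt (Fin.lt_def.mp hmm))))

lemma canon_sub (hk : ∀ j : β, E (k j) j ∧ ∀ i : Fin n, E i j → i ≤ k j)
    (hm : ∀ j : β, Prec n β E k (inl (m j)) (inr j) ∧
      ∀ i : Fin n, Prec n β E k (inl i) (inr j) → i ≤ m j)
    (hc : IsCanonicalOrder n β E k m r) {j h : β}
    (hmeq : m j = m h) (hjh : r (inr j) (inr h))
    {t : Fin n} (hth : E t h) (hntj : ¬ E t j) :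
    ∀ s : Fin n, E s j → t < s := by
  have hnp : ¬ Prec n β E k (inr h) (inr j) := fun hp => canon_asymm hc hjh (hc.2.1 _ _ hp)
  have htm : t ≤ m j := by
    rw [hmeq]
    exact le_trans ((hk h).2 t hth) ((hm h).2 _ (Prec.A (hk h).1))
  have htkj : t < k j := by
    rcases lt_trichotomy t (k j) with h1 | h1 | h1
    · exact h1
    · exact absurd (h1.symm ▸ (hk j).1) hntj
    · exact absurd (prec_main_s15 hk hm j h t h1 htm hth) hnp
  intro s hsj
  rcases lt_trichotomy t s with h1 | h1 | h1
  · exact h1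
  · exact absurd (h1.symm ▸ hsj) hntj
  · exact absurd (Prec.TB h1 htkj hsj hntj hth) hnp

lemma canon_key (hk : ∀ j : β, E (k j) j ∧ ∀ i : Fin n, E i j → i ≤ k j)
    (hm : ∀ j : β, Prec n β E k (inl (m j)) (inr j) ∧
      ∀ i : Fin n, Prec n β E k (inl i) (inr j) → i ≤ m j)
    (hN : NOverlap n β E) {r₁ r₂ : (Fin n ⊕ β) → (Fin n ⊕ β) → Prop}
    (h1 : IsCanonicalOrder n β E k m r₁) (h2 : IsCanonicalOrder n β E k m r₂)
    {j h : β} (hne : j ≠ h) (hjh : r₁ (inr j) (inr h)) (hhj : r₂ (inr h) (inr j)) :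
    False := by
  have hmeq : m j = m h := by
    rcases lt_trichotomy (m j) (m h) with hl | he | hl
    · exact absurd (canon_mlt h2 hl) (fun hx => canon_asymm h2 hx hhj)
    · exact he
    · exact absurd (canon_mlt h1 hl) (fun hx => canon_asymm h1 hjh hx)
  obtain ⟨t, hth, hntj⟩ : ∃ t, E t h ∧ ¬ E t j := by
    have := hN h j (Ne.symm hne); push_neg at this; exact this
  obtain ⟨s, hsj, hnsh⟩ : ∃ s, E s j ∧ ¬ E s h := by
    have := hN j h hne; push_neg at this; exact this
  exact absurd (canon_sub hk hm h2 hmeq.symm hhj hsj hnsh t hth)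
    (lt_asymm (canon_sub hk hm h1 hmeq hjh hth hntj s hsj))

lemma canon_unique (hk : ∀ j : β, E (k j) j ∧ ∀ i : Fin n, E i j → i ≤ k j)
    (hm : ∀ j : β, Prec n β E k (inl (m j)) (inr j) ∧
      ∀ i : Fin n, Prec n β E k (inl i) (inr j) → i ≤ m j)
    (hN : NOverlap n β E) {r₁ r₂ : (Fin n ⊕ β) → (Fin n ⊕ β) → Prop}
    (h1 : IsCanonicalOrder n β E k m r₁) (h2 : IsCanonicalOrder n β E k m r₂) :
    r₁ = r₂ := by
  have mainimp : ∀ (ra rb : (Fin n ⊕ β) → (Fin n ⊕ β) → Prop),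
      IsCanonicalOrder n β E k m ra → IsCanonicalOrder n β E k m rb →
      ∀ c d, ra c d → rb c d := by
    intro ra rb ha hb c d hcd
    rcases c with i | j <;> rcases d with i' | j'
    · exact hb.2.1 _ _ (Prec.O (canon_lt_of_inl_inl ha hcd))
    · exact canon_inl_le hb (canon_le_of_inl_inr ha hcd)
    · exact canon_inr_lt hb (canon_lt_of_inr_inl ha hcd)
    · have hne : j ≠ j' := by rintro rfl; exact ha.1.irrefl _ hcd
      rcases (haveI := hb.1; trichotomous_of rb (inr j) (inr j')) with hx | hx | hx
      · exact hx
      · exact absurd (inr.inj hx) hne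
      · exact (canon_key hk hm hN ha hb hne hcd hx).elim
  funext c d
  exact propext ⟨mainimp r₁ r₂ h1 h2 c d, mainimp r₂ r₁ h2 h1 c d⟩

end Canon
end Aux

def canonR {n : ℕ} {β : Type} (m : β → Fin n)
    (r₀ : (Fin n ⊕ β) → (Fin n ⊕ β) → Prop) : (Fin n ⊕ β) → (Fin n ⊕ β) → Prop
  | inl i, inl i' => i < i'
  | inl i, inr j => i ≤ m j
  | inr j, inl i => m j < i
  | inr j, inr h => m j < m h ∨ (m j = m h ∧ r₀ (inr j) (inr h))

section Exist
variable {n : ℕ} {β : Type} {E : Fin n → β → Prop} {k : β → Fin n} {m : β → Fin n}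

lemma canonR_canonical (hk : ∀ j : β, E (k j) j ∧ ∀ i : Fin n, E i j → i ≤ k j)
    (hm : ∀ j : β, Prec n β E k (inl (m j)) (inr j) ∧
      ∀ i : Fin n, Prec n β E k (inl i) (inr j) → i ≤ m j)
    {r₀ : (Fin n ⊕ β) → (Fin n ⊕ β) → Prop} (hr₀ : IsAStickOrder n β E r₀) :
    IsCanonicalOrder n β E k m (canonR m r₀) := by
  have hsto₀ := hr₀.1.1
  refine ⟨?_, ?_, ?_⟩
  · refine { trichotomous := ?_, irrefl := ?_, trans := ?_ }
    · intro a b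
      refine (fun (H : canonR m r₀ a b ∨ a = b ∨ canonR m r₀ b a) h1 h2 =>
        (H.resolve_left h1).resolve_right h2) ?_
      rcases a with i | j <;> rcases b with i' | j'
      · rcases lt_trichotomy i i' with h | h | h
        · exact Or.inl h
        · exact Or.inr (Or.inl (by rw [h]))
        · exact Or.inr (Or.inr h)
      · rcases le_or_gt i (m j') with h | h
        · exact Or.inl h
        · exact Or.inr (Or.inr h)
      · rcases le_or_gt i' (m j) with h | h
        · exact Or.inr (Or.inr h)
        · exact Or.inl h
      · rcases lt_trichotomy (m j) (m j') with h | h | h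
        · exact Or.inl (Or.inl h)
        · rcases (haveI := hsto₀; trichotomous_of r₀ (inr j) (inr j')) with h' | h' | h'
          · exact Or.inl (Or.inr ⟨h, h'⟩)
          · exact Or.inr (Or.inl h')
          · exact Or.inr (Or.inr (Or.inr ⟨h.symm, h'⟩))
        · exact Or.inr (Or.inr (Or.inl h))
    · intro a
      rcases a with i | j
      · exact lt_irrefl i
      · rintro (h | ⟨-, h⟩)
        · exact lt_irrefl _ h
        · exact hsto₀.irrefl _ h
    · intro a b c hab hbc
      rcases a with i | j <;> rcases b with i' | j' <;> rcases c with i'' | j''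
      · exact lt_trans hab hbc
      · show i ≤ m j''
        exact le_of_lt (lt_of_lt_of_le hab hbc)
      · exact lt_of_le_of_lt hab hbc
      · show i ≤ m j''
        rcases hbc with h | ⟨h, -⟩
        · exact le_of_lt (lt_of_le_of_lt hab h)
        · exact h ▸ hab
      · exact lt_trans hab hbc
      · exact Or.inl (lt_of_lt_of_le hab hbc)
      · show m j < i''
        rcases hab with h | ⟨h, -⟩
        · exact lt_trans h hbc
        · rw [h]; exact hbc
      · rcases hab with h | ⟨h, hr⟩ <;> rcases hbc with h' | ⟨h', hr'⟩
        · exact Or.inl (lt_trans h h')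
        · exact Or.inl (h' ▸ h)
        · exact Or.inl (by rw [h]; exact h')
        · exact Or.inr ⟨h.trans h', hsto₀.trans _ _ _ hr hr'⟩
  · intro c d hcd
    rcases c with i | j <;> rcases d with i' | j'
    · exact prec_inl_inl hcd i i' rfl rfl
    · exact (hm j').2 i hcd
    · obtain ⟨u, hu⟩ := prec_inr_shape hcd j rfl
      exact absurd hu (by simp)
    · have hle : m j ≤ m j' := (hm j').2 (m j) (Prec.T (hm j).1 hcd)
      rcases lt_or_eq_of_le hle with h | h
      · exact Or.inl h
      · exact Or.inr ⟨h, stick_ext hk hr₀ hcd⟩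
  · intro j
    refine ⟨le_refl (m j), fun hlt => ?_⟩
    exact Fin.lt_def.mpr (Nat.lt_succ_self _)

end Exist

/-- If `G` is an A-Stick N-overlap graph, then `G` has exactly one
canonical order. -/
theorem stmt15 (n : ℕ) (β : Type) [Fintype β] (E : Fin n → β → Prop) (k : β → Fin n)
    (hk : ∀ j : β, E (k j) j ∧ ∀ i : Fin n, E i j → i ≤ k j)
    (m : β → Fin n)
    (hm : ∀ j : β, Prec n β E k (inl (m j)) (inr j) ∧
      ∀ i : Fin n, Prec n β E k (inl i) (inr j) → i ≤ m j)
    (hA : ∃ r, IsAStickOrder n β E r)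
    (hN : NOverlap n β E) :
    ∃! r : (Fin n ⊕ β) → (Fin n ⊕ β) → Prop, IsCanonicalOrder n β E k m r := by
  obtain ⟨r₀, hr₀⟩ := hA
  refine ⟨canonR m r₀, canonR_canonical hk hm hr₀, fun r' hr' => ?_⟩
  exact canon_unique hk hm hN hr' (canonR_canonical hk hm hr₀)
end
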